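/- Sensitivity analysis bound: Let N ≥ 3, α ≤ 1/3, Γ ∈ [1, N/4], and π₁,…,π_N nonnegative reals summing to 1 with π_i ∈ [1/(ΓN), Γ/N] for all i. Suppose β ∈ [0,1] and a set S ⊂ [N] with β = Σ_{i∈S} π_i satisfy (1/3)β³ − β² + β·[Σ_{i∈S} π_i² + α(1 − Σ_l π_l²)] ≥ (4/3 − 2α)·Σ_{i∈S} π_i³ − (1−2α)·Σ_{i∈S} π_i², with β > 0. Then β ≤ (3 − 3Γ/N − sqrt(9(1−Γ/N)² − 12(−4Γ²/(3N²) + Γ/N + α(1 − (2Γ+1)/N + 2Γ²/N²))))/2. -/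
import Mathlib

set_option maxHeartbeats 1000000

open Finset

private lemma sens_core (n c α β Q2 Q3 P2 : ℝ)
    (hn0 : 0 < n) (hn4 : n ≤ 1/4) (hc4 : c ≤ 1/4) (hc1 : n ≤ c)
    (hα : α ≤ 1/3) (hβ0 : 0 < β) (hβ1 : β ≤ 1)
    (hQ2nn : 0 ≤ Q2) (hQ3nn : 0 ≤ Q3)
    (hQ2c : Q2 ≤ c * β) (hQ2b : Q2 ≤ β ^ 2)
    (hE' : 0 ≤ c * (1/2 - c) * β - Q2/2 + Q3)
    (hI' : 0 ≤ c ^ 2 * β - 2 * c * Q2 + Q3)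
    (hP2c : P2 ≤ c) (hP2n : n ≤ P2)
    (h : (4 / 3 - 2 * α) * Q3 - (1 - 2 * α) * Q2 ≤
      (1 / 3) * β ^ 3 - β ^ 2 + β * (Q2 + α * (1 - P2))) :
    0 ≤ β^2/3 - (1-c)*β + (c - 4/3*c^2 + α*(1 - n - 2*c + 2*c^2)) := by
  rcases le_or_gt 0 α with hα0 | hα0
  · -- case α ≥ 0
    have t0 : 0 ≤ α * (β * (P2 - n)) :=
      mul_nonneg hα0 (mul_nonneg hβ0.le (by linarith))
    have t1 : 0 ≤ (1/3 + β - α) * (c*β - Q2) :=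
      mul_nonneg (by linarith) (by linarith)
    have t2 : 0 ≤ (4/3 - 2*α) * (c*(1/2 - c)*β - Q2/2 + Q3) :=
      mul_nonneg (by linarith) hE'
    have hmul : 0 ≤ β * (β^2/3 - (1-c)*β
        + (c - 4/3*c^2 + α*(1 - n - 2*c + 2*c^2))) := by
      linarith [h, t0, t1, t2]
    by_contra hcon
    push_neg at hcon
    linarith [hmul, mul_pos hβ0 (neg_pos.mpr hcon)]
  · -- case α < 0
    have hS1 : 0 ≤ c*(1-c)*β - Q2 + Q3 := by
      linarith [mul_nonneg (show (0:ℝ) ≤ 1 - 2*c by linarith)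
        (show (0:ℝ) ≤ c*β - Q2 by linarith), hI']
    have hS0 : (1/3) * (c*β - Q2) ≤ (1+β)*(c*β - Q2) - 4/3*(c^2*β - Q3) := by
      linarith [mul_nonneg hβ0.le (show (0:ℝ) ≤ c*β - Q2 by linarith), hE']
    have hS0nn : 0 ≤ (1+β)*(c*β - Q2) - 4/3*(c^2*β - Q3) := by linarith
    rcases le_or_gt (β*(P2 - n) - 2*(c*(1-c)*β - Q2 + Q3)) 0 with hW | hW
    · -- W ≤ 0
      have t0 : 0 ≤ α * (β*(P2 - n) - 2*(c*(1-c)*β - Q2 + Q3)) := by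
        have := mul_nonneg (neg_nonneg.mpr hα0.le)
          (neg_nonneg.mpr hW)
        linarith [this]
      have hmul : 0 ≤ β * (β^2/3 - (1-c)*β
          + (c - 4/3*c^2 + α*(1 - n - 2*c + 2*c^2))) := by
        linarith [h, t0, hS0nn]
      by_contra hcon
      push_neg at hcon
      linarith [hmul, mul_pos hβ0 (neg_pos.mpr hcon)]
    · -- W > 0
      have hBlb : β * (1/4) ≤ β*(1-P2) - 2*Q2 + 2*Q3 := by
        linarith [mul_nonneg hβ0.le (sub_nonneg.mpr hP2c), hQ2c, hQ3nn,
          mul_nonneg hβ0.le (show (0:ℝ) ≤ 3/4 - 3*c by linarith)]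
      have hBpos : 0 < β*(1-P2) - 2*Q2 + 2*Q3 := by linarith
      have hG : 0 ≤ β*(β^2/3 - (1-c)*β + (c - 4/3*c^2))
          - ((1+β)*(c*β - Q2) - 4/3*(c^2*β - Q3))
          + α*(β*(1-P2) - 2*Q2 + 2*Q3) := by linarith [h]
      rcases le_or_gt (β^2/3 - (1-c)*β + (c - 4/3*c^2)) 0 with hq0 | hq0
      · exfalso
        have h1 : 0 ≤ β * (-(β^2/3 - (1-c)*β + (c - 4/3*c^2))) :=
          mul_nonneg hβ0.le (by linarith)
        have h2 : 0 < (-α) * (β*(1-P2) - 2*Q2 + 2*Q3) :=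
          mul_pos (by linarith) hBpos
        linarith [hG, h1, h2, hS0nn]
      · -- q0 > 0, hence β < c
        have hβc : β < c := by
          by_contra hcon
          push_neg at hcon
          linarith [mul_nonneg (sub_nonneg.mpr hcon)
            (show (0:ℝ) ≤ 3 - 4*c - β by linarith), hq0]
        have hq0ub : β^2/3 - (1-c)*β + (c - 4/3*c^2) ≤ 1/3*(c-β)*(3-4*c) := by
          linarith [mul_nonneg (sub_nonneg.mpr hβc.le) hβ0.le]
        have hWub : β*(P2 - n) - 2*(c*(1-c)*β - Q2 + Q3) ≤ β*(c - n) := by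
          linarith [hS1, mul_nonneg hβ0.le (sub_nonneg.mpr hP2c)]
        have hKlb : (3-4*c)*(c-n) ≤ 1 - n - 2*c + 2*c^2 := by
          linarith [mul_nonneg (show (0:ℝ) ≤ 1-2*c by linarith)
            (show (0:ℝ) ≤ 1-3*c by linarith),
            mul_nonneg hn0.le (show (0:ℝ) ≤ 1-2*c by linarith)]
        have hS0lb : β/3*(c-β) ≤ (1+β)*(c*β - Q2) - 4/3*(c^2*β - Q3) := by
          linarith [hS0, hQ2b]
        have hK0 : (0:ℝ) < 1 - n - 2*c + 2*c^2 := by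
          linarith [sq_nonneg c]
        have hkey : (β^2/3 - (1-c)*β + (c - 4/3*c^2))
            * (β*(P2 - n) - 2*(c*(1-c)*β - Q2 + Q3))
            ≤ (1 - n - 2*c + 2*c^2)
              * ((1+β)*(c*β - Q2) - 4/3*(c^2*β - Q3)) := by
          have e1 := mul_le_mul_of_nonneg_left hWub hq0.le
          have e2 := mul_le_mul_of_nonneg_right hq0ub
            (mul_nonneg hβ0.le (show (0:ℝ) ≤ c - n by linarith))
          have e3 := mul_le_mul_of_nonneg_right hKlb
            (mul_nonneg (by linarith : (0:ℝ) ≤ β/3) (by linarith : (0:ℝ) ≤ c-β))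
          have e4 := mul_le_mul_of_nonneg_left hS0lb hK0.le
          linarith [e1, e2, e3, e4]
        have hKmul : 0 ≤ (1 - n - 2*c + 2*c^2)
            * (β*(β^2/3 - (1-c)*β + (c - 4/3*c^2))
              - ((1+β)*(c*β - Q2) - 4/3*(c^2*β - Q3))
              + α*(β*(1-P2) - 2*Q2 + 2*Q3)) :=
          mul_nonneg hK0.le hG
        have hfin : 0 ≤ (β*(1-P2) - 2*Q2 + 2*Q3)
            * ((β^2/3 - (1-c)*β + (c - 4/3*c^2))
              + α*(1 - n - 2*c + 2*c^2)) := by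
          linarith [hKmul, hkey]
        by_contra hcon
        push_neg at hcon
        linarith [hfin, mul_pos hBpos (neg_pos.mpr hcon)]

/-- Sensitivity analysis bound: for `N ≥ 3`, `α ≤ 1/3`, `Γ ∈ [1, N/4]`, weights
`π_i ∈ [1/(ΓN), Γ/N]` nonnegative summing to 1, if `β ∈ (0,1]` with
`β = ∑_{i∈S} π_i` satisfies the key weighted cubic inequality, then `β` is bounded
by the smaller root of the associated quadratic. -/
theorem sensitivity_bound (N : ℕ) (hN : 3 ≤ N)
    (α : ℝ) (hα : α ≤ 1 / 3)
    (Γ : ℝ) (hΓ1 : 1 ≤ Γ) (hΓN : Γ ≤ (N : ℝ) / 4)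
    (π : Fin N → ℝ) (hπ0 : ∀ i, 0 ≤ π i) (hπ1 : ∑ i, π i = 1)
    (hπlb : ∀ i, 1 / (Γ * (N : ℝ)) ≤ π i) (hπub : ∀ i, π i ≤ Γ / (N : ℝ))
    (S : Finset (Fin N)) (β : ℝ) (hβS : β = ∑ i ∈ S, π i)
    (hβ0 : 0 < β) (hβ1 : β ≤ 1)
    (h : (4 / 3 - 2 * α) * ∑ i ∈ S, π i ^ 3 - (1 - 2 * α) * ∑ i ∈ S, π i ^ 2 ≤
      (1 / 3) * β ^ 3 - β ^ 2 +
        β * (∑ i ∈ S, π i ^ 2 + α * (1 - ∑ l, π l ^ 2))) :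
    β ≤ (3 - 3 * Γ / (N : ℝ) -
      Real.sqrt (9 * (1 - Γ / (N : ℝ)) ^ 2 -
        12 * (-(4 * Γ ^ 2 / (3 * (N : ℝ) ^ 2)) + Γ / (N : ℝ)
          + α * (1 - (2 * Γ + 1) / (N : ℝ) + 2 * Γ ^ 2 / (N : ℝ) ^ 2)))) / 2 := by
  have hN3 : (3:ℝ) ≤ (N:ℝ) := by exact_mod_cast hN
  have hNpos : (0:ℝ) < (N:ℝ) := by linarith
  have hN4 : (4:ℝ) ≤ (N:ℝ) := by nlinarith
  set c : ℝ := Γ / (N:ℝ) with hc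
  have hninv0 : 0 < 1/(N:ℝ) := by positivity
  have hninv : 1/(N:ℝ) ≤ 1/4 := by
    rw [div_le_div_iff₀ hNpos (by norm_num)]; linarith
  have hc4 : c ≤ 1/4 := by
    rw [hc, div_le_iff₀ hNpos]; linarith
  have hc1 : 1/(N:ℝ) ≤ c := by
    rw [hc]; gcongr
  set Q2 := ∑ i ∈ S, π i ^ 2 with hQ2
  set Q3 := ∑ i ∈ S, π i ^ 3 with hQ3
  set P2 := ∑ l, π l ^ 2 with hP2
  have hQ2nn : 0 ≤ Q2 := by
    rw [hQ2]; exact Finset.sum_nonneg fun i _ => by positivity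
  have hQ3nn : 0 ≤ Q3 := by
    rw [hQ3]; exact Finset.sum_nonneg fun i _ => pow_nonneg (hπ0 i) 3
  have hQ2c : Q2 ≤ c * β := by
    rw [hQ2, hβS, Finset.mul_sum]
    exact Finset.sum_le_sum fun i _ => by nlinarith [hπ0 i, hπub i]
  have hπβ : ∀ i ∈ S, π i ≤ β := fun i hi => by
    rw [hβS]; exact Finset.single_le_sum (fun j _ => hπ0 j) hi
  have hQ2b : Q2 ≤ β ^ 2 := by
    have h1 : Q2 ≤ ∑ i ∈ S, β * π i := by
      rw [hQ2]
      exact Finset.sum_le_sum fun i hi => by nlinarith [hπ0 i, hπβ i hi]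
    rw [← Finset.mul_sum, ← hβS] at h1
    nlinarith [h1]
  have hE' : 0 ≤ c * (1/2 - c) * β - Q2/2 + Q3 := by
    have key : ∀ i ∈ S, (0:ℝ) ≤ c * (1/2 - c) * π i - π i ^ 2 / 2 + π i ^ 3 := by
      intro i _
      nlinarith [mul_nonneg (mul_nonneg (hπ0 i) (sub_nonneg.mpr (hπub i)))
        (show (0:ℝ) ≤ 1/2 - c - π i by nlinarith [hπub i])]
    have h1 := Finset.sum_nonneg key
    rwa [Finset.sum_add_distrib, Finset.sum_sub_distrib, ← Finset.mul_sum,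
      ← Finset.sum_div, ← hβS, ← hQ2, ← hQ3] at h1
  have hI' : 0 ≤ c ^ 2 * β - 2 * c * Q2 + Q3 := by
    have key : ∀ i ∈ S, (0:ℝ) ≤ c ^ 2 * π i - 2 * c * π i ^ 2 + π i ^ 3 := by
      intro i _
      nlinarith [mul_nonneg (hπ0 i) (sq_nonneg (c - π i))]
    have h1 := Finset.sum_nonneg key
    rwa [Finset.sum_add_distrib, Finset.sum_sub_distrib, ← Finset.mul_sum,
      ← Finset.mul_sum, ← hβS, ← hQ2, ← hQ3] at h1
  have hP2c : P2 ≤ c := by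
    have h1 : P2 ≤ ∑ l, c * π l := by
      rw [hP2]
      exact Finset.sum_le_sum fun l _ => by nlinarith [hπ0 l, hπub l]
    rwa [← Finset.mul_sum, hπ1, mul_one] at h1
  have hP2n : 1/(N:ℝ) ≤ P2 := by
    have h1 := sq_sum_le_card_mul_sum_sq (s := (Finset.univ : Finset (Fin N))) (f := π)
    rw [hπ1, Finset.card_univ, Fintype.card_fin, ← hP2] at h1
    rw [div_le_iff₀ hNpos]
    nlinarith [h1]
  have hstep1 := sens_core (1/(N:ℝ)) c α β Q2 Q3 P2 hninv0 hninv hc4 hc1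
    hα hβ0 hβ1 hQ2nn hQ3nn hQ2c hQ2b hE' hI' hP2c hP2n h
  have hnn : (0:ℝ) ≤ 3 - 3*c - 2*β := by linarith
  have harg : 9 * (1 - Γ / (N : ℝ)) ^ 2 -
        12 * (-(4 * Γ ^ 2 / (3 * (N : ℝ) ^ 2)) + Γ / (N : ℝ)
          + α * (1 - (2 * Γ + 1) / (N : ℝ) + 2 * Γ ^ 2 / (N : ℝ) ^ 2))
      = 9 * (1 - c) ^ 2
        - 12 * (c - 4/3*c^2 + α*(1 - 1/(N:ℝ) - 2*c + 2*c^2)) := by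
    rw [hc]; field_simp; ring
  have hle : 9 * (1 - c) ^ 2
        - 12 * (c - 4/3*c^2 + α*(1 - 1/(N:ℝ) - 2*c + 2*c^2))
      ≤ (3 - 3*c - 2*β) ^ 2 := by nlinarith [hstep1]
  have hsq : Real.sqrt (9 * (1 - Γ / (N : ℝ)) ^ 2 -
        12 * (-(4 * Γ ^ 2 / (3 * (N : ℝ) ^ 2)) + Γ / (N : ℝ)
          + α * (1 - (2 * Γ + 1) / (N : ℝ) + 2 * Γ ^ 2 / (N : ℝ) ^ 2)))
      ≤ 3 - 3*c - 2*β := by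
    rw [harg]
    calc Real.sqrt (9 * (1 - c) ^ 2
          - 12 * (c - 4/3*c^2 + α*(1 - 1/(N:ℝ) - 2*c + 2*c^2)))
        ≤ Real.sqrt ((3 - 3*c - 2*β) ^ 2) := Real.sqrt_le_sqrt hle
      _ = 3 - 3*c - 2*β := Real.sqrt_sq hnn
  have hc' : 3 * Γ / (N:ℝ) = 3 * c := by rw [hc]; ring
  linarith [hsq, hc'.ge, hc'.le]
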